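/- Let F, G : A → B be functors and ⟨F|G⟩ the inserter category with forgetful functor P and canonical transformation ψ : FP → GP. Every morphism g in ⟨F|G⟩ such that G(P g) is a monomorphism is cartesian with respect to P over P g. -/

import Mathlib

open CategoryTheory

universe v₁ v₂ v₃ u₁ u₂ u₃

variable {A : Type u₁} {B : Type u₂} [Category.{v₁} A] [Category.{v₂} B]

/-- The inserter category `⟨F|G⟩` of two functors `F G : A ⥤ B`: objects are pairs
`(A, α : F A ⟶ G A)`. -/
structure Inserter (F G : A ⥤ B) where
  obj : A
  hom : F.obj obj ⟶ G.obj obj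

namespace Inserter

variable {F G : A ⥤ B}

instance : Category (Inserter F G) where
  Hom X Y := { u : X.obj ⟶ Y.obj // X.hom ≫ G.map u = F.map u ≫ Y.hom }
  id X := ⟨𝟙 X.obj, by simp⟩
  comp {X Y Z} u v := ⟨u.1 ≫ v.1, by
    rw [F.map_comp, G.map_comp, ← Category.assoc, u.2, Category.assoc, v.2, ← Category.assoc]⟩
  id_comp u := Subtype.ext (Category.id_comp u.1)
  comp_id u := Subtype.ext (Category.comp_id u.1)
  assoc u v w := Subtype.ext (Category.assoc u.1 v.1 w.1)

/-- The forgetful functor `P : ⟨F|G⟩ ⥤ A`. -/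
def P (F G : A ⥤ B) : Inserter F G ⥤ A where
  obj X := X.obj
  map u := u.1
  map_id _ := rfl
  map_comp _ _ := rfl

end Inserter

/-- A morphism `f` of `A` is cartesian with respect to `F` over `F.map f`. -/
def IsCartesian {A' : Type u₃} [Category.{v₃} A'] (F : A' ⥤ A) {X Y : A'} (f : X ⟶ Y) : Prop :=
  ∀ ⦃Z : A'⦄ (g : Z ⟶ Y) (h : F.obj Z ⟶ F.obj X),
    h ≫ F.map f = F.map g → ∃! k : Z ⟶ X, F.map k = h ∧ k ≫ f = g

/-- Every morphism `g` of the inserter category `⟨F|G⟩` such that `G (P g)` is a monomorphism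
is cartesian with respect to the forgetful functor `P` over `P g`. -/
theorem inserter_mono_isCartesian {F G : A ⥤ B} {X Y : Inserter F G}
    (g : X ⟶ Y) (hmono : Mono (G.map g.1)) :
    IsCartesian (Inserter.P F G) g := by
  intro Z g' h hcomp
  change Z.obj ⟶ X.obj at h
  have hcomp' : h ≫ g.1 = g'.1 := hcomp
  have compat : Z.hom ≫ G.map h = F.map h ≫ X.hom := by
    have := hmono
    rw [← cancel_mono (G.map g.1)]
    rw [Category.assoc, ← G.map_comp, hcomp', g'.2, Category.assoc, g.2,
      ← Category.assoc, ← F.map_comp, hcomp']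
  refine ⟨⟨h, compat⟩, ⟨rfl, Subtype.ext hcomp'⟩, ?_⟩
  rintro k ⟨hk1, _⟩
  exact Subtype.ext hk1
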